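/- Convolving the 3-dimensional heat kernel with the initial field v⁰ (phases ξ₁=−π/3, ξ₂=π/3, ξ₃=π/2) yields v⁰(x)e^{−3α²κt}: for t > 0, (2√(πκt))^{−3} ∫_{ℝ³} v⁰ᵢ(y) e^{−|x−y|²/(4κt)} dy = v⁰ᵢ(x) e^{−3α²κt} for each i = 1,2,3. -/

import Mathlib

open Real MeasureTheory

noncomputable def V1 (α x₁ x₂ x₃ : ℝ) : ℝ :=
  sin (α * x₁ - π/3) * cos (α * x₂ + π/3) * sin (α * x₃ + π/2)
    - sin (α * x₁ + π/3) * cos (α * x₃ - π/3) * sin (α * x₂ + π/2)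

noncomputable def V2 (α x₁ x₂ x₃ : ℝ) : ℝ := V1 α x₂ x₃ x₁

noncomputable def V3 (α x₁ x₂ x₃ : ℝ) : ℝ := V1 α x₃ x₁ x₂

open Complex in

lemma gauss_cos_sin (b : ℝ) (hb : 0 < b) (a : ℝ) :
    (∫ x : ℝ, Real.cos (a*x) * Real.exp (-b*x^2)) = Real.sqrt (π/b) * Real.exp (-a^2/(4*b)) ∧
    (∫ x : ℝ, Real.sin (a*x) * Real.exp (-b*x^2)) = 0 := by
  have hb' : 0 < (b:ℂ).re := by simpa using hb
  have key := fourierIntegral_gaussian hb' (a : ℂ)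
  have hint : Integrable (fun x : ℝ => cexp (I * a * x) * cexp (-(b:ℂ) * x ^ 2)) := by
    have := integrable_cexp_quadratic hb' (I * a) 0
    refine this.congr ?_
    filter_upwards with x
    rw [← Complex.exp_add]
    ring_nf
  have hπb : (0:ℝ) ≤ π/b := div_nonneg pi_pos.le hb.le
  have hRHS : ((π:ℂ) / b) ^ (1 / 2 : ℂ) * cexp (-(a:ℂ) ^ 2 / (4 * b))
      = ((Real.sqrt (π/b) * Real.exp (-a^2/(4*b)) : ℝ) : ℂ) := by
    have h1 : ((π:ℂ) / b) ^ (1 / 2 : ℂ) = ((Real.sqrt (π/b) : ℝ) : ℂ) := by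
      rw [Real.sqrt_eq_rpow]
      rw [show ((π:ℂ)/b) = (((π/b : ℝ)):ℂ) by push_cast; ring]
      rw [show ((1/2 : ℂ)) = (((1/2:ℝ)):ℂ) by norm_num]
      exact (Complex.ofReal_cpow hπb (1/2)).symm
    have h2 : cexp (-(a:ℂ) ^ 2 / (4 * b)) = ((Real.exp (-a^2/(4*b)) : ℝ) : ℂ) := by
      rw [show -(a:ℂ)^2/(4*(b:ℂ)) = ((-a^2/(4*b) : ℝ) : ℂ) by push_cast; ring,
        ← Complex.ofReal_exp]
    rw [h1, h2]
    push_cast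
    ring
  rw [hRHS] at key
  have hz : ∀ x : ℝ, I * (a:ℂ) * x + -(b:ℂ) * x ^ 2
      = (((-b*x^2 : ℝ)):ℂ) + (((a*x : ℝ)):ℂ) * I := by
    intro x; push_cast; ring
  have hre : ∀ x : ℝ, (cexp (I * a * x) * cexp (-(b:ℂ) * x ^ 2)).re
      = Real.cos (a*x) * Real.exp (-b*x^2) := by
    intro x
    rw [← Complex.exp_add, hz x, Complex.exp_re]
    simp [← Complex.ofReal_pow, mul_comm]
  have him : ∀ x : ℝ, (cexp (I * a * x) * cexp (-(b:ℂ) * x ^ 2)).im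
      = Real.sin (a*x) * Real.exp (-b*x^2) := by
    intro x
    rw [← Complex.exp_add, hz x, Complex.exp_im]
    simp [← Complex.ofReal_pow, mul_comm]
  constructor
  · have := integral_re hint
    rw [key] at this
    simp only [RCLike.re_to_complex, Complex.ofReal_re] at this
    rw [← this]
    exact integral_congr_ae (Filter.Eventually.of_forall fun x => (hre x).symm)
  · have := integral_im hint
    rw [key] at this
    simp only [RCLike.im_to_complex, Complex.ofReal_im] at this
    rw [← this]
    exact integral_congr_ae (Filter.Eventually.of_forall fun x => (him x).symm)

lemma gauss_integrable (c x : ℝ) (hc : 0 < c) {f : ℝ → ℝ} (hf : Continuous f)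
    (hbd : ∀ y, |f y| ≤ 1) :
    Integrable (fun y => f y * Real.exp (-(x-y)^2/(4*c))) := by
  have h4c : (0:ℝ) < 1/(4*c) := by positivity
  have hg : Integrable (fun y : ℝ => Real.exp (-(1/(4*c))*(y-x)^2)) :=
    (integrable_exp_neg_mul_sq h4c).comp_sub_right x
  have heq : ∀ y : ℝ, Real.exp (-(1/(4*c))*(y-x)^2) = Real.exp (-(x-y)^2/(4*c)) := by
    intro y; congr 1; ring
  have := hg.bdd_mul (c := 1) hf.aestronglyMeasurable (Filter.Eventually.of_forall fun y => by simpa using hbd y)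
  refine this.congr ?_
  filter_upwards with y
  rw [heq y]

lemma conv_sin (a φ c x : ℝ) (hc : 0 < c) :
    (∫ y : ℝ, Real.sin (a*y+φ) * Real.exp (-(x-y)^2/(4*c)))
      = 2 * Real.sqrt (π*c) * (Real.sin (a*x+φ) * Real.exp (-a^2*c)) := by
  have h4c : (0:ℝ) < 1/(4*c) := by positivity
  have hshift : (∫ y : ℝ, Real.sin (a*y+φ) * Real.exp (-(x-y)^2/(4*c)))
      = ∫ u : ℝ, Real.sin (a*(x+u)+φ) * Real.exp (-(x-(x+u))^2/(4*c)) :=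
    (integral_add_left_eq_self (fun y => Real.sin (a*y+φ) * Real.exp (-(x-y)^2/(4*c))) x).symm
  rw [hshift]
  have heq : ∀ u : ℝ, Real.sin (a*(x+u)+φ) * Real.exp (-(x-(x+u))^2/(4*c))
      = Real.sin (a*x+φ) * (Real.cos (a*u) * Real.exp (-(1/(4*c))*u^2))
        + Real.cos (a*x+φ) * (Real.sin (a*u) * Real.exp (-(1/(4*c))*u^2)) := by
    intro u
    have h1 : Real.sin (a*(x+u)+φ) = Real.sin ((a*x+φ) + a*u) := by ring_nf
    have h2 : (-(x-(x+u))^2/(4*c)) = -(1/(4*c))*u^2 := by ring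
    rw [h1, h2, Real.sin_add]
    ring
  simp_rw [heq]
  have hic : Integrable (fun u : ℝ => Real.cos (a*u) * Real.exp (-(1/(4*c))*u^2)) := by
    have := (integrable_exp_neg_mul_sq h4c).bdd_mul (c := 1)
      (Real.continuous_cos.comp (continuous_const.mul continuous_id)).aestronglyMeasurable
      (Filter.Eventually.of_forall fun u => by simpa using Real.abs_cos_le_one (a*u))
    exact this
  have his : Integrable (fun u : ℝ => Real.sin (a*u) * Real.exp (-(1/(4*c))*u^2)) := by
    have := (integrable_exp_neg_mul_sq h4c).bdd_mul (c := 1)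
      (Real.continuous_sin.comp (continuous_const.mul continuous_id)).aestronglyMeasurable
      (Filter.Eventually.of_forall fun u => by simpa using Real.abs_sin_le_one (a*u))
    exact this
  rw [integral_add (hic.const_mul _) (his.const_mul _), MeasureTheory.integral_const_mul, MeasureTheory.integral_const_mul,
    (gauss_cos_sin _ h4c a).1, (gauss_cos_sin _ h4c a).2]
  have hs : Real.sqrt (π/(1/(4*c))) = 2 * Real.sqrt (π*c) := by
    rw [show π/(1/(4*c)) = 4*(π*c) by field_simp, show (4:ℝ) = 2^2 by norm_num,
      Real.sqrt_mul (by positivity), Real.sqrt_sq (by norm_num)]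
  have he : (-a^2/(4*(1/(4*c)))) = -a^2*c := by field_simp
  rw [hs, he]
  ring

lemma conv_cos (a φ c x : ℝ) (hc : 0 < c) :
    (∫ y : ℝ, Real.cos (a*y+φ) * Real.exp (-(x-y)^2/(4*c)))
      = 2 * Real.sqrt (π*c) * (Real.cos (a*x+φ) * Real.exp (-a^2*c)) := by
  have h4c : (0:ℝ) < 1/(4*c) := by positivity
  have hshift : (∫ y : ℝ, Real.cos (a*y+φ) * Real.exp (-(x-y)^2/(4*c)))
      = ∫ u : ℝ, Real.cos (a*(x+u)+φ) * Real.exp (-(x-(x+u))^2/(4*c)) :=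
    (integral_add_left_eq_self (fun y => Real.cos (a*y+φ) * Real.exp (-(x-y)^2/(4*c))) x).symm
  rw [hshift]
  have heq : ∀ u : ℝ, Real.cos (a*(x+u)+φ) * Real.exp (-(x-(x+u))^2/(4*c))
      = Real.cos (a*x+φ) * (Real.cos (a*u) * Real.exp (-(1/(4*c))*u^2))
        + (-Real.sin (a*x+φ)) * (Real.sin (a*u) * Real.exp (-(1/(4*c))*u^2)) := by
    intro u
    have h1 : Real.cos (a*(x+u)+φ) = Real.cos ((a*x+φ) + a*u) := by ring_nf
    have h2 : (-(x-(x+u))^2/(4*c)) = -(1/(4*c))*u^2 := by ring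
    rw [h1, h2, Real.cos_add]
    ring
  simp_rw [heq]
  have hic : Integrable (fun u : ℝ => Real.cos (a*u) * Real.exp (-(1/(4*c))*u^2)) := by
    have := (integrable_exp_neg_mul_sq h4c).bdd_mul (c := 1)
      (Real.continuous_cos.comp (continuous_const.mul continuous_id)).aestronglyMeasurable
      (Filter.Eventually.of_forall fun u => by simpa using Real.abs_cos_le_one (a*u))
    exact this
  have his : Integrable (fun u : ℝ => Real.sin (a*u) * Real.exp (-(1/(4*c))*u^2)) := by
    have := (integrable_exp_neg_mul_sq h4c).bdd_mul (c := 1)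
      (Real.continuous_sin.comp (continuous_const.mul continuous_id)).aestronglyMeasurable
      (Filter.Eventually.of_forall fun u => by simpa using Real.abs_sin_le_one (a*u))
    exact this
  rw [integral_add (hic.const_mul _) (his.const_mul _), MeasureTheory.integral_const_mul, MeasureTheory.integral_const_mul,
    (gauss_cos_sin _ h4c a).1, (gauss_cos_sin _ h4c a).2]
  have hs : Real.sqrt (π/(1/(4*c))) = 2 * Real.sqrt (π*c) := by
    rw [show π/(1/(4*c)) = 4*(π*c) by field_simp, show (4:ℝ) = 2^2 by norm_num,
      Real.sqrt_mul (by positivity), Real.sqrt_sq (by norm_num)]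
  have he : (-a^2/(4*(1/(4*c)))) = -a^2*c := by field_simp
  rw [hs, he]
  ring

lemma component (c x₁ x₂ x₃ e F₁ F₂ F₃ G₁ G₂ G₃ : ℝ) (hc : 0 < c)
    (f₁ f₂ f₃ g₁ g₂ g₃ : ℝ → ℝ)
    (hf₁c : Continuous f₁) (hf₂c : Continuous f₂) (hf₃c : Continuous f₃)
    (hg₁c : Continuous g₁) (hg₂c : Continuous g₂) (hg₃c : Continuous g₃)
    (hf₁b : ∀ y, |f₁ y| ≤ 1) (hf₂b : ∀ y, |f₂ y| ≤ 1) (hf₃b : ∀ y, |f₃ y| ≤ 1)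
    (hg₁b : ∀ y, |g₁ y| ≤ 1) (hg₂b : ∀ y, |g₂ y| ≤ 1) (hg₃b : ∀ y, |g₃ y| ≤ 1)
    (h₁ : (∫ y : ℝ, f₁ y * Real.exp (-(x₁-y)^2/(4*c))) = 2*Real.sqrt (π*c)*(F₁*e))
    (h₂ : (∫ y : ℝ, f₂ y * Real.exp (-(x₂-y)^2/(4*c))) = 2*Real.sqrt (π*c)*(F₂*e))
    (h₃ : (∫ y : ℝ, f₃ y * Real.exp (-(x₃-y)^2/(4*c))) = 2*Real.sqrt (π*c)*(F₃*e))
    (h₄ : (∫ y : ℝ, g₁ y * Real.exp (-(x₁-y)^2/(4*c))) = 2*Real.sqrt (π*c)*(G₁*e))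
    (h₅ : (∫ y : ℝ, g₂ y * Real.exp (-(x₂-y)^2/(4*c))) = 2*Real.sqrt (π*c)*(G₂*e))
    (h₆ : (∫ y : ℝ, g₃ y * Real.exp (-(x₃-y)^2/(4*c))) = 2*Real.sqrt (π*c)*(G₃*e)) :
    ((2 * Real.sqrt (π * c))^3)⁻¹ *
      (∫ y : ℝ × ℝ × ℝ, (f₁ y.1 * f₂ y.2.1 * f₃ y.2.2 - g₁ y.1 * g₂ y.2.1 * g₃ y.2.2) *
        Real.exp (-((x₁ - y.1)^2 + (x₂ - y.2.1)^2 + (x₃ - y.2.2)^2) / (4*c)))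
      = (F₁*F₂*F₃ - G₁*G₂*G₃) * (e*(e*e)) := by
  have hsq : (0:ℝ) < Real.sqrt (π*c) := Real.sqrt_pos.mpr (by positivity)
  have hsplit : ∀ y : ℝ × ℝ × ℝ,
      Real.exp (-((x₁ - y.1)^2 + (x₂ - y.2.1)^2 + (x₃ - y.2.2)^2) / (4*c))
      = Real.exp (-(x₁-y.1)^2/(4*c)) *
          (Real.exp (-(x₂-y.2.1)^2/(4*c)) * Real.exp (-(x₃-y.2.2)^2/(4*c))) := by
    intro y
    rw [← Real.exp_add, ← Real.exp_add]
    congr 1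
    ring
  have hA : Integrable (fun y : ℝ × ℝ × ℝ =>
      (f₁ y.1 * Real.exp (-(x₁-y.1)^2/(4*c))) *
        ((f₂ y.2.1 * Real.exp (-(x₂-y.2.1)^2/(4*c))) *
          (f₃ y.2.2 * Real.exp (-(x₃-y.2.2)^2/(4*c))))) := by
    rw [MeasureTheory.Measure.volume_eq_prod]
    exact (gauss_integrable c x₁ hc hf₁c hf₁b).mul_prod
      ((gauss_integrable c x₂ hc hf₂c hf₂b).mul_prod (gauss_integrable c x₃ hc hf₃c hf₃b))
  have hB : Integrable (fun y : ℝ × ℝ × ℝ =>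
      (g₁ y.1 * Real.exp (-(x₁-y.1)^2/(4*c))) *
        ((g₂ y.2.1 * Real.exp (-(x₂-y.2.1)^2/(4*c))) *
          (g₃ y.2.2 * Real.exp (-(x₃-y.2.2)^2/(4*c))))) := by
    rw [MeasureTheory.Measure.volume_eq_prod]
    exact (gauss_integrable c x₁ hc hg₁c hg₁b).mul_prod
      ((gauss_integrable c x₂ hc hg₂c hg₂b).mul_prod (gauss_integrable c x₃ hc hg₃c hg₃b))
  have hcg : (∫ y : ℝ × ℝ × ℝ, (f₁ y.1 * f₂ y.2.1 * f₃ y.2.2 - g₁ y.1 * g₂ y.2.1 * g₃ y.2.2) *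
        Real.exp (-((x₁ - y.1)^2 + (x₂ - y.2.1)^2 + (x₃ - y.2.2)^2) / (4*c)))
      = ∫ y : ℝ × ℝ × ℝ, ((f₁ y.1 * Real.exp (-(x₁-y.1)^2/(4*c))) *
          ((f₂ y.2.1 * Real.exp (-(x₂-y.2.1)^2/(4*c))) *
            (f₃ y.2.2 * Real.exp (-(x₃-y.2.2)^2/(4*c))))
        - (g₁ y.1 * Real.exp (-(x₁-y.1)^2/(4*c))) *
          ((g₂ y.2.1 * Real.exp (-(x₂-y.2.1)^2/(4*c))) *
            (g₃ y.2.2 * Real.exp (-(x₃-y.2.2)^2/(4*c))))) := by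
    refine integral_congr_ae (Filter.Eventually.of_forall fun y => ?_)
    dsimp only
    rw [hsplit y]
    ring
  rw [hcg, integral_sub hA hB]
  have hP : (∫ y : ℝ × ℝ × ℝ, (f₁ y.1 * Real.exp (-(x₁-y.1)^2/(4*c))) *
      ((f₂ y.2.1 * Real.exp (-(x₂-y.2.1)^2/(4*c))) *
        (f₃ y.2.2 * Real.exp (-(x₃-y.2.2)^2/(4*c)))))
      = (2*Real.sqrt (π*c)*(F₁*e)) * ((2*Real.sqrt (π*c)*(F₂*e)) * (2*Real.sqrt (π*c)*(F₃*e))) := by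
    refine (integral_prod_mul (fun u => f₁ u * Real.exp (-(x₁-u)^2/(4*c)))
      (fun v : ℝ × ℝ => (f₂ v.1 * Real.exp (-(x₂-v.1)^2/(4*c))) *
        (f₃ v.2 * Real.exp (-(x₃-v.2)^2/(4*c))))).trans ?_
    rw [h₁]
    exact congrArg (2*Real.sqrt (π*c)*(F₁*e) * ·)
      ((integral_prod_mul (fun u => f₂ u * Real.exp (-(x₂-u)^2/(4*c)))
        (fun u => f₃ u * Real.exp (-(x₃-u)^2/(4*c)))).trans (by rw [h₂, h₃]))
  have hQ : (∫ y : ℝ × ℝ × ℝ, (g₁ y.1 * Real.exp (-(x₁-y.1)^2/(4*c))) *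
      ((g₂ y.2.1 * Real.exp (-(x₂-y.2.1)^2/(4*c))) *
        (g₃ y.2.2 * Real.exp (-(x₃-y.2.2)^2/(4*c)))))
      = (2*Real.sqrt (π*c)*(G₁*e)) * ((2*Real.sqrt (π*c)*(G₂*e)) * (2*Real.sqrt (π*c)*(G₃*e))) := by
    refine (integral_prod_mul (fun u => g₁ u * Real.exp (-(x₁-u)^2/(4*c)))
      (fun v : ℝ × ℝ => (g₂ v.1 * Real.exp (-(x₂-v.1)^2/(4*c))) *
        (g₃ v.2 * Real.exp (-(x₃-v.2)^2/(4*c))))).trans ?_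
    rw [h₄]
    exact congrArg (2*Real.sqrt (π*c)*(G₁*e) * ·)
      ((integral_prod_mul (fun u => g₂ u * Real.exp (-(x₂-u)^2/(4*c)))
        (fun u => g₃ u * Real.exp (-(x₃-u)^2/(4*c)))).trans (by rw [h₅, h₆]))
  rw [hP, hQ]
  have hne : (2 * Real.sqrt (π*c))^3 ≠ 0 := by positivity
  field_simp


theorem heat_kernel_convolution_v0 (α κ t x₁ x₂ x₃ : ℝ) (hκ : 0 < κ) (ht : 0 < t) :
    ((2 * Real.sqrt (π * κ * t))^3)⁻¹ *
        (∫ y : ℝ × ℝ × ℝ, V1 α y.1 y.2.1 y.2.2 *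
          exp (-((x₁ - y.1)^2 + (x₂ - y.2.1)^2 + (x₃ - y.2.2)^2) / (4*κ*t)))
      = V1 α x₁ x₂ x₃ * exp (-3 * α^2 * κ * t) ∧
    ((2 * Real.sqrt (π * κ * t))^3)⁻¹ *
        (∫ y : ℝ × ℝ × ℝ, V2 α y.1 y.2.1 y.2.2 *
          exp (-((x₁ - y.1)^2 + (x₂ - y.2.1)^2 + (x₃ - y.2.2)^2) / (4*κ*t)))
      = V2 α x₁ x₂ x₃ * exp (-3 * α^2 * κ * t) ∧
    ((2 * Real.sqrt (π * κ * t))^3)⁻¹ *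
        (∫ y : ℝ × ℝ × ℝ, V3 α y.1 y.2.1 y.2.2 *
          exp (-((x₁ - y.1)^2 + (x₂ - y.2.1)^2 + (x₃ - y.2.2)^2) / (4*κ*t)))
      = V3 α x₁ x₂ x₃ * exp (-3 * α^2 * κ * t) := by
  have hc : (0:ℝ) < κ * t := mul_pos hκ ht
  have hcsin : ∀ φ : ℝ, Continuous (fun z : ℝ => Real.sin (α*z + φ)) :=
    fun φ => Real.continuous_sin.comp ((continuous_const.mul continuous_id).add continuous_const)
  have hccos : ∀ φ : ℝ, Continuous (fun z : ℝ => Real.cos (α*z + φ)) :=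
    fun φ => Real.continuous_cos.comp ((continuous_const.mul continuous_id).add continuous_const)
  have hexp3 : Real.exp (-α^2*(κ*t)) * (Real.exp (-α^2*(κ*t)) * Real.exp (-α^2*(κ*t)))
      = Real.exp (-3*α^2*κ*t) := by
    rw [← Real.exp_add, ← Real.exp_add]; congr 1; ring
  simp only [show π*κ*t = π*(κ*t) by ring, show (4:ℝ)*κ*t = 4*(κ*t) by ring]
  refine ⟨?_, ?_, ?_⟩
  · have key := component (κ*t) x₁ x₂ x₃ (Real.exp (-α^2*(κ*t)))
      (Real.sin (α*x₁ + -(π/3))) (Real.cos (α*x₂ + π/3)) (Real.sin (α*x₃ + π/2))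
      (Real.sin (α*x₁ + π/3)) (Real.sin (α*x₂ + π/2)) (Real.cos (α*x₃ + -(π/3))) hc
      (fun z => Real.sin (α*z + -(π/3))) (fun z => Real.cos (α*z + π/3))
      (fun z => Real.sin (α*z + π/2))
      (fun z => Real.sin (α*z + π/3)) (fun z => Real.sin (α*z + π/2))
      (fun z => Real.cos (α*z + -(π/3)))
      (hcsin _) (hccos _) (hcsin _) (hcsin _) (hcsin _) (hccos _)
      (fun y => Real.abs_sin_le_one _) (fun y => Real.abs_cos_le_one _)
      (fun y => Real.abs_sin_le_one _) (fun y => Real.abs_sin_le_one _)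
      (fun y => Real.abs_sin_le_one _) (fun y => Real.abs_cos_le_one _)
      (conv_sin α _ (κ*t) x₁ hc) (conv_cos α _ (κ*t) x₂ hc) (conv_sin α _ (κ*t) x₃ hc)
      (conv_sin α _ (κ*t) x₁ hc) (conv_sin α _ (κ*t) x₂ hc) (conv_cos α _ (κ*t) x₃ hc)
    have hileft : (∫ y : ℝ × ℝ × ℝ, V1 α y.1 y.2.1 y.2.2 *
          Real.exp (-((x₁ - y.1)^2 + (x₂ - y.2.1)^2 + (x₃ - y.2.2)^2) / (4*(κ*t))))
        = ∫ y : ℝ × ℝ × ℝ,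
          (Real.sin (α*y.1 + -(π/3)) * Real.cos (α*y.2.1 + π/3) * Real.sin (α*y.2.2 + π/2)
            - Real.sin (α*y.1 + π/3) * Real.sin (α*y.2.1 + π/2) * Real.cos (α*y.2.2 + -(π/3))) *
          Real.exp (-((x₁ - y.1)^2 + (x₂ - y.2.1)^2 + (x₃ - y.2.2)^2) / (4*(κ*t))) := by
      refine integral_congr_ae (Filter.Eventually.of_forall fun y => ?_)
      simp only [V1, sub_eq_add_neg]
      ring
    rw [hileft]
    refine key.trans ?_
    rw [hexp3]
    simp only [V1, sub_eq_add_neg]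
    ring
  · have key := component (κ*t) x₁ x₂ x₃ (Real.exp (-α^2*(κ*t)))
      (Real.sin (α*x₁ + π/2)) (Real.sin (α*x₂ + -(π/3))) (Real.cos (α*x₃ + π/3))
      (Real.cos (α*x₁ + -(π/3))) (Real.sin (α*x₂ + π/3)) (Real.sin (α*x₃ + π/2)) hc
      (fun z => Real.sin (α*z + π/2)) (fun z => Real.sin (α*z + -(π/3)))
      (fun z => Real.cos (α*z + π/3))
      (fun z => Real.cos (α*z + -(π/3))) (fun z => Real.sin (α*z + π/3))
      (fun z => Real.sin (α*z + π/2))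
      (hcsin _) (hcsin _) (hccos _) (hccos _) (hcsin _) (hcsin _)
      (fun y => Real.abs_sin_le_one _) (fun y => Real.abs_sin_le_one _)
      (fun y => Real.abs_cos_le_one _) (fun y => Real.abs_cos_le_one _)
      (fun y => Real.abs_sin_le_one _) (fun y => Real.abs_sin_le_one _)
      (conv_sin α _ (κ*t) x₁ hc) (conv_sin α _ (κ*t) x₂ hc) (conv_cos α _ (κ*t) x₃ hc)
      (conv_cos α _ (κ*t) x₁ hc) (conv_sin α _ (κ*t) x₂ hc) (conv_sin α _ (κ*t) x₃ hc)
    have hileft : (∫ y : ℝ × ℝ × ℝ, V2 α y.1 y.2.1 y.2.2 *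
          Real.exp (-((x₁ - y.1)^2 + (x₂ - y.2.1)^2 + (x₃ - y.2.2)^2) / (4*(κ*t))))
        = ∫ y : ℝ × ℝ × ℝ,
          (Real.sin (α*y.1 + π/2) * Real.sin (α*y.2.1 + -(π/3)) * Real.cos (α*y.2.2 + π/3)
            - Real.cos (α*y.1 + -(π/3)) * Real.sin (α*y.2.1 + π/3) * Real.sin (α*y.2.2 + π/2)) *
          Real.exp (-((x₁ - y.1)^2 + (x₂ - y.2.1)^2 + (x₃ - y.2.2)^2) / (4*(κ*t))) := by
      refine integral_congr_ae (Filter.Eventually.of_forall fun y => ?_)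
      simp only [V2, V1, sub_eq_add_neg]
      ring
    rw [hileft]
    refine key.trans ?_
    rw [hexp3]
    simp only [V2, V1, sub_eq_add_neg]
    ring
  · have key := component (κ*t) x₁ x₂ x₃ (Real.exp (-α^2*(κ*t)))
      (Real.cos (α*x₁ + π/3)) (Real.sin (α*x₂ + π/2)) (Real.sin (α*x₃ + -(π/3)))
      (Real.sin (α*x₁ + π/2)) (Real.cos (α*x₂ + -(π/3))) (Real.sin (α*x₃ + π/3)) hc
      (fun z => Real.cos (α*z + π/3)) (fun z => Real.sin (α*z + π/2))
      (fun z => Real.sin (α*z + -(π/3)))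
      (fun z => Real.sin (α*z + π/2)) (fun z => Real.cos (α*z + -(π/3)))
      (fun z => Real.sin (α*z + π/3))
      (hccos _) (hcsin _) (hcsin _) (hcsin _) (hccos _) (hcsin _)
      (fun y => Real.abs_cos_le_one _) (fun y => Real.abs_sin_le_one _)
      (fun y => Real.abs_sin_le_one _) (fun y => Real.abs_sin_le_one _)
      (fun y => Real.abs_cos_le_one _) (fun y => Real.abs_sin_le_one _)
      (conv_cos α _ (κ*t) x₁ hc) (conv_sin α _ (κ*t) x₂ hc) (conv_sin α _ (κ*t) x₃ hc)
      (conv_sin α _ (κ*t) x₁ hc) (conv_cos α _ (κ*t) x₂ hc) (conv_sin α _ (κ*t) x₃ hc)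
    have hileft : (∫ y : ℝ × ℝ × ℝ, V3 α y.1 y.2.1 y.2.2 *
          Real.exp (-((x₁ - y.1)^2 + (x₂ - y.2.1)^2 + (x₃ - y.2.2)^2) / (4*(κ*t))))
        = ∫ y : ℝ × ℝ × ℝ,
          (Real.cos (α*y.1 + π/3) * Real.sin (α*y.2.1 + π/2) * Real.sin (α*y.2.2 + -(π/3))
            - Real.sin (α*y.1 + π/2) * Real.cos (α*y.2.1 + -(π/3)) * Real.sin (α*y.2.2 + π/3)) *
          Real.exp (-((x₁ - y.1)^2 + (x₂ - y.2.1)^2 + (x₃ - y.2.2)^2) / (4*(κ*t))) := by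
      refine integral_congr_ae (Filter.Eventually.of_forall fun y => ?_)
      simp only [V3, V1, sub_eq_add_neg]
      ring
    rw [hileft]
    refine key.trans ?_
    rw [hexp3]
    simp only [V3, V1, sub_eq_add_neg]
    ring
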